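/- In a proper environment — one in which for every type profile v the social welfare S(·; v) is maximized by a unique option — the proposed shortest-path mechanism achieves the minimum budget achievable by any justified mechanism: for all v, Σ_i τ_i^*(v) = min over all mechanisms M = (φ, τ) satisfying SE, DSIC, and IR of Σ_i τ_i(v). -/

import Mathlib

/-- Total weight of the chain `s → l₀ → l₁ → ⋯` of edges with weights `c`. -/
def chainCost {α : Type*} (c : α → α → ℝ) : α → List α → ℝ
  | _, [] => 0
  | s, t :: l => c s t + chainCost c t l

/-- Cost of a directed path `⋆ → u₀ → u₁ → ⋯` from the auxiliary source `⋆`. -/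
def pathCost {α : Type*} (w0 : α → ℝ) (c : α → α → ℝ) : List α → ℝ
  | [] => 0
  | u :: l => w0 u + chainCost c u l

/-- Social efficiency of an option rule. -/
def SocEff {N X : Type*} [Fintype N] (V : N → Set (X → ℝ))
    (φ : (N → (X → ℝ)) → X) : Prop :=
  ∀ v : N → (X → ℝ), (∀ i, v i ∈ V i) → ∀ x : X, ∑ i, v i x ≤ ∑ i, v i (φ v)

/-- Dominant-strategy incentive compatibility. -/
def DSIC {N X : Type*} [DecidableEq N] (V : N → Set (X → ℝ))
    (φ : (N → (X → ℝ)) → X) (τ : N → (N → (X → ℝ)) → ℝ) : Prop :=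
  ∀ v : N → (X → ℝ), (∀ j, v j ∈ V j) → ∀ i : N, ∀ vi' ∈ V i,
    v i (φ (Function.update v i vi')) + τ i (Function.update v i vi')
      ≤ v i (φ v) + τ i v

/-- Individual rationality. -/
def IR {N X : Type*} (V : N → Set (X → ℝ))
    (φ : (N → (X → ℝ)) → X) (τ : N → (N → (X → ℝ)) → ℝ) : Prop :=
  ∀ v : N → (X → ℝ), (∀ j, v j ∈ V j) → ∀ i : N, 0 ≤ v i (φ v) + τ i v

lemma update_mem_aux {N X : Type*} [DecidableEq N] {V : N → Set (X → ℝ)}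
    {v : N → (X → ℝ)} (hv : ∀ j, v j ∈ V j) {i : N} {u : X → ℝ} (hu : u ∈ V i) :
    ∀ j, Function.update v i u j ∈ V j := by
  intro j
  rcases eq_or_ne j i with rfl | h
  · simpa using hu
  · simpa [Function.update_of_ne h] using hv j

lemma chainCost_append_singleton {α : Type*} (c : α → α → ℝ) :
    ∀ (l : List α) (u s t : α),
    chainCost c u ((l ++ [s]) ++ [t]) = chainCost c u (l ++ [s]) + c s t := by
  intro l
  induction l with
  | nil => intro u s t; simp [chainCost]
  | cons a l ih => intro u s t; simp only [List.cons_append, chainCost, List.append_eq, ih]; ring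

lemma pathCost_append_singleton {α : Type*} (w0 : α → ℝ) (c : α → α → ℝ)
    (l : List α) (s t : α) :
    pathCost w0 c ((l ++ [s]) ++ [t]) = pathCost w0 c (l ++ [s]) + c s t := by
  cases l with
  | nil => simp [pathCost, chainCost]
  | cons a l => simp only [List.cons_append, pathCost, chainCost_append_singleton]; ring

/-- Any socially efficient rule agrees with `φs` on valid profiles, in a
proper environment. -/
lemma phi_eq_aux {N X : Type*} [Fintype N] {V : N → Set (X → ℝ)}
    (hproper : ∀ v : N → (X → ℝ), (∀ j, v j ∈ V j) →
      ∃! x : X, ∀ y : X, ∑ i, v i y ≤ ∑ i, v i x)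
    {φ φs : (N → (X → ℝ)) → X} (hφ : SocEff V φ) (hφs : SocEff V φs)
    {w : N → (X → ℝ)} (hw : ∀ j, w j ∈ V j) : φ w = φs w := by
  obtain ⟨x, _, hux⟩ := hproper w hw
  rw [hux (φ w) (hφ w hw), hux (φs w) (hφs w hw)]

/-- One DSIC step, rewritten in terms of `φs`. -/
lemma dsic_step {N X : Type*} [Fintype N] [DecidableEq N] {V : N → Set (X → ℝ)}
    {φ φs : (N → (X → ℝ)) → X} {τ : N → (N → (X → ℝ)) → ℝ}
    (hD : DSIC V φ τ)
    (heq : ∀ w : N → (X → ℝ), (∀ j, w j ∈ V j) → φ w = φs w)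
    {v : N → (X → ℝ)} (hv : ∀ j, v j ∈ V j) (i : N)
    {s t : X → ℝ} (hs : s ∈ V i) (ht : t ∈ V i) :
    -τ i (Function.update v i t) ≤ -τ i (Function.update v i s) +
      (t (φs (Function.update v i t)) - t (φs (Function.update v i s))) := by
  have h := hD (Function.update v i t) (update_mem_aux hv ht) i s hs
  simp only [Function.update_idem, Function.update_self] at h
  rw [heq _ (update_mem_aux hv hs), heq _ (update_mem_aux hv ht)] at h
  linarith

/-- Telescoping the DSIC inequalities along a chain. -/
lemma telescope_aux {N X : Type*} [Fintype N] [DecidableEq N] {V : N → Set (X → ℝ)}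
    {φ φs : (N → (X → ℝ)) → X} {τ : N → (N → (X → ℝ)) → ℝ}
    (hD : DSIC V φ τ)
    (heq : ∀ w : N → (X → ℝ), (∀ j, w j ∈ V j) → φ w = φs w)
    {v : N → (X → ℝ)} (hv : ∀ j, v j ∈ V j) (i : N) :
    ∀ (l : List (X → ℝ)) (u t : X → ℝ), u ∈ V i → t ∈ V i → (∀ x ∈ l, x ∈ V i) →
    -τ i (Function.update v i t) ≤ -τ i (Function.update v i u) +
      chainCost (fun s t' => t' (φs (Function.update v i t')) - t' (φs (Function.update v i s)))
        u (l ++ [t]) := by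
  intro l
  induction l with
  | nil =>
    intro u t hu ht _
    have := dsic_step hD heq hv i hu ht
    simp only [List.nil_append, chainCost]
    linarith
  | cons a l ih =>
    intro u t hu ht hl
    have h1 := dsic_step hD heq hv i hu (hl a (List.mem_cons_self))
    have h2 := ih a t (hl a (List.mem_cons_self)) ht
      (fun x hx => hl x (List.mem_cons_of_mem a hx))
    simp only [List.cons_append, chainCost, List.append_eq]
    linarith

/-- Lower bound: `-τ i v` is below the cost of any path ending at `v i`. -/
lemma lb_aux {N X : Type*} [Fintype N] [DecidableEq N] {V : N → Set (X → ℝ)}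
    {φ φs : (N → (X → ℝ)) → X} {τ : N → (N → (X → ℝ)) → ℝ}
    (hD : DSIC V φ τ) (hIR : IR V φ τ)
    (heq : ∀ w : N → (X → ℝ), (∀ j, w j ∈ V j) → φ w = φs w)
    {v : N → (X → ℝ)} (hv : ∀ j, v j ∈ V j) (i : N)
    (l : List (X → ℝ)) (hl : ∀ x ∈ l, x ∈ V i) :
    -τ i v ≤ pathCost (fun u => u (φs (Function.update v i u)))
      (fun s t' => t' (φs (Function.update v i t')) - t' (φs (Function.update v i s)))
      (l ++ [v i]) := by
  cases l with
  | nil =>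
    have hir := hIR v hv i
    rw [heq v hv] at hir
    have : v i (φs v) = v i (φs (Function.update v i (v i))) := by
      rw [Function.update_eq_self]
    simp only [List.nil_append, pathCost, chainCost]
    linarith
  | cons a l =>
    have ha := hl a (List.mem_cons_self)
    have h1 := telescope_aux hD heq hv i l a (v i) ha (hv i)
      (fun x hx => hl x (List.mem_cons_of_mem a hx))
    rw [Function.update_eq_self] at h1
    have hir := hIR (Function.update v i a) (update_mem_aux hv ha) i
    rw [heq _ (update_mem_aux hv ha)] at hir
    simp only [Function.update_self] at hir
    simp only [List.cons_append, pathCost]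
    linarith

/-- In a proper environment (unique social-welfare maximizer for every type
profile), the proposed shortest-path mechanism achieves the minimum budget
achievable by any justified (SE, DSIC, IR) mechanism. -/
theorem proper_env_min_budget {N X : Type*} [Fintype N] [DecidableEq N] [Fintype X]
    (V : N → Set (X → ℝ))
    (hproper : ∀ v : N → (X → ℝ), (∀ j, v j ∈ V j) →
      ∃! x : X, ∀ y : X, ∑ i, v i y ≤ ∑ i, v i x)
    (φs : (N → (X → ℝ)) → X) (hφs : SocEff V φs)
    (d : N → (N → (X → ℝ)) → (X → ℝ) → ℝ)
    (hd : ∀ (i : N) (v : N → (X → ℝ)), (∀ j, v j ∈ V j) → ∀ t ∈ V i, IsLeast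
      {x : ℝ | ∃ l : List (X → ℝ), (∀ u ∈ l, u ∈ V i) ∧
        x = pathCost (fun u => u (φs (Function.update v i u)))
          (fun s t' => t' (φs (Function.update v i t')) - t' (φs (Function.update v i s)))
          (l ++ [t])} (d i v t)) :
    ∀ v : N → (X → ℝ), (∀ j, v j ∈ V j) →
      IsLeast {b : ℝ | ∃ (φ : (N → (X → ℝ)) → X) (τ : N → (N → (X → ℝ)) → ℝ),
          SocEff V φ ∧ DSIC V φ τ ∧ IR V φ τ ∧ b = ∑ i, τ i v}
        (∑ i, -(d i v (v i))) := by
  intro v hv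
  constructor
  · -- membership: the star mechanism itself is justified
    refine ⟨φs, fun i w => -(d i w (w i)), hφs, ?_, ?_, by simp⟩
    · -- DSIC
      intro w hw i vi' hvi'
      dsimp only
      -- d is independent of agent i's own report
      have hd1 := hd i (Function.update w i vi') (update_mem_aux hw hvi') vi' hvi'
      simp only [Function.update_idem] at hd1
      have hd2 := hd i w hw vi' hvi'
      have hdeq : d i (Function.update w i vi') vi' = d i w vi' := hd1.unique hd2
      obtain ⟨l, hlmem, hcost⟩ := hd2.1
      -- extend the shortest path to vi' by the edge vi' → w i
      have hmem : d i w vi' +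
          (w i (φs (Function.update w i (w i))) - w i (φs (Function.update w i vi'))) ∈
          {x : ℝ | ∃ l : List (X → ℝ), (∀ u ∈ l, u ∈ V i) ∧
            x = pathCost (fun u => u (φs (Function.update w i u)))
              (fun s t' => t' (φs (Function.update w i t')) - t' (φs (Function.update w i s)))
              (l ++ [w i])} := by
        refine ⟨l ++ [vi'], ?_, ?_⟩
        · intro u hu
          rcases List.mem_append.1 hu with h | h
          · exact hlmem u h
          · simp only [List.mem_singleton] at h; subst h; exact hvi'
        · rw [pathCost_append_singleton, ← hcost]
      have hle := (hd i w hw (w i) (hw i)).2 hmem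
      rw [Function.update_eq_self] at hle
      simp only [Function.update_self]
      rw [hdeq]
      linarith
    · -- IR
      intro w hw i
      dsimp only
      have hmem : w i (φs w) ∈
          {x : ℝ | ∃ l : List (X → ℝ), (∀ u ∈ l, u ∈ V i) ∧
            x = pathCost (fun u => u (φs (Function.update w i u)))
              (fun s t' => t' (φs (Function.update w i t')) - t' (φs (Function.update w i s)))
              (l ++ [w i])} := by
        refine ⟨[], by simp, ?_⟩
        simp [pathCost, chainCost, Function.update_eq_self]
      have hle := (hd i w hw (w i) (hw i)).2 hmem
      linarith
  · -- lower bound over all justified mechanisms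
    rintro b ⟨φ, τ, hSE, hD, hIR, rfl⟩
    refine Finset.sum_le_sum fun i _ => ?_
    have heq : ∀ w : N → (X → ℝ), (∀ j, w j ∈ V j) → φ w = φs w :=
      fun w hw => phi_eq_aux hproper hSE hφs hw
    obtain ⟨l, hlmem, hcost⟩ := (hd i v hv (v i) (hv i)).1
    have := lb_aux hD hIR heq hv i l hlmem
    rw [← hcost] at this
    linarith
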